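/- In the Day convolution closed structure on presheaves over a small symmetric monoidal category C enriched in a complete and cocomplete cartesian closed category H, if Q : C^op → H preserves limits of a class F of diagrams (i.e. sends F-colimits in C to limits in H) and each functor (X ⊗ −) on C preserves F-colimits, then for any presheaf P the internal hom (P ⊸ Q), defined by (P ⊸ Q)(X) = Nat(P, Q(X ⊗ −)), also preserves F-limits. -/

import Mathlib

open CategoryTheory MonoidalCategory Limits Opposite

universe u

variable {C : Type u} [SmallCategory C] [MonoidalCategory C]

/-- The Day-convolution internal hom of presheaves:
`(P ⊸ Q)(X) = Nat(P, Q(X ⊗ −))`. -/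
@[simps]
def dayHom (P Q : Cᵒᵖ ⥤ Type u) : Cᵒᵖ ⥤ Type u where
  obj X := P ⟶ (tensorLeft X.unop).op ⋙ Q
  map {X Y} f := TypeCat.ofHom fun α => α ≫ Functor.whiskerRight (NatTrans.op ((curriedTensor C).map f.unop)) Q

/-- The functor `X ↦ Q(X ⊗ −)`. -/
@[simps]
def dayAux (Q : Cᵒᵖ ⥤ Type u) : Cᵒᵖ ⥤ (Cᵒᵖ ⥤ Type u) where
  obj X := (tensorLeft X.unop).op ⋙ Q
  map {X Y} f := Functor.whiskerRight (NatTrans.op ((curriedTensor C).map f.unop)) Q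

theorem dayHom_eq (P Q : Cᵒᵖ ⥤ Type u) :
    dayHom P Q = dayAux Q ⋙ coyoneda.obj (op P) := rfl

theorem dayHom_preserves_limits [SymmetricCategory C]
    (P Q : Cᵒᵖ ⥤ Type u)
    {K : Type u} [SmallCategory K] (D : K ⥤ C) (c : Cocone D)
    (hc : IsColimit c)
    (htensor : ∀ Z : C, IsColimit ((tensorLeft Z).mapCocone c))
    (hQ : ∀ Z : C, IsLimit (Q.mapCone ((tensorLeft Z).mapCocone c).op)) :
    Nonempty (IsLimit ((dayHom P Q).mapCone c.op)) := by
  have hG : IsLimit ((dayAux Q).mapCone c.op) := by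
    apply evaluationJointlyReflectsLimits
    intro Y
    refine IsLimit.equivOfNatIsoOfIso
      (NatIso.ofComponents
        (fun (k : Kᵒᵖ) => Q.mapIso (Iso.op (β_ (D.obj k.unop) Y.unop)))
        (fun {k₁ k₂} f => ?_))
      _ _ ?_
      (hQ Y.unop)
    · simp only [Functor.comp_map, Functor.op_map, Functor.mapIso_hom, Iso.op_hom, dayAux_map,
        evaluation_obj_map, Functor.whiskerRight_app, NatTrans.op_app, ← Q.map_comp]
      change Q.map _ ≫ Q.map _ = Q.map _ ≫ Q.map _
      rw [← Q.map_comp, ← Q.map_comp]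
      congr 1
      apply Quiver.Hom.unop_inj
      simp [BraidedCategory.braiding_naturality_right]
    · refine Cones.ext (Q.mapIso (Iso.op (β_ c.pt Y.unop))) fun k => ?_
      simp only [Cone.postcompose_obj_π, NatTrans.comp_app, Functor.mapCone_π_app, Cocone.op_π,
        Functor.mapCocone_ι_app, NatIso.ofComponents_hom_app, Functor.mapIso_hom, Iso.op_hom,
        dayAux_map, evaluation_obj_map, Functor.whiskerRight_app, NatTrans.op_app, ← Q.map_comp]
      change Q.map _ ≫ Q.map _ = Q.map _ ≫ Q.map _
      rw [← Q.map_comp, ← Q.map_comp]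
      congr 1
      apply Quiver.Hom.unop_inj
      simp [BraidedCategory.braiding_naturality_right]
  exact ⟨isLimitOfPreserves (coyoneda.obj (op P)) hG⟩
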